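/- Let λ ∈ ℝ and define the sequence (x_n) by x_n = λ if n = 10^k for some k ∈ ℕ, x_n = −λ if n = 10^k + 1 for some k ∈ ℕ, and x_n = 0 otherwise. Then SR_st(Σ x_n) = λℤ = {λ m : m ∈ ℤ}. -/

import Mathlib

open Filter Topology

/-- A set `A ⊆ ℕ` is negligible if its natural density is zero. -/
def Negligible (A : Set ℕ) : Prop :=
  Tendsto (fun n : ℕ => ((A ∩ Set.Iio n).ncard : ℝ) / n) atTop (nhds 0)

/-- A sequence of reals statistically converges to `a`. -/
def StatTendsto (s : ℕ → ℝ) (a : ℝ) : Prop :=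
  ∀ ε : ℝ, ε > 0 → Negligible {n : ℕ | |s n - a| > ε}

/-- The statistical sum range of the series `Σ x_k`. -/
def SRst (x : ℕ → ℝ) : Set ℝ :=
  {s : ℝ | ∃ π : Equiv.Perm ℕ,
    StatTendsto (fun n : ℕ => ∑ k ∈ Finset.range n, x (π k)) s}

/-! ### Auxiliary arithmetic lemmas -/

lemma pow10_ne {c : ℕ} (h1 : 1 ≤ c) (h3 : c ≤ 3) (i j : ℕ) : (10:ℕ)^j ≠ 10^i + c := by
  rcases j with _ | j
  · have := Nat.one_le_pow i 10 (by norm_num)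
    simp only [pow_zero]; omega
  · have hj : (10:ℕ)^(j+1) = 10 * 10^j := by ring
    have hj1 := Nat.one_le_pow j 10 (by norm_num)
    rcases i with _ | i
    · simp only [pow_zero]; omega
    · have hi : (10:ℕ)^(i+1) = 10 * 10^i := by ring
      have hi1 := Nat.one_le_pow i 10 (by norm_num)
      omega

/-! ### Negligible sets -/

lemma nat_div_le_div {a b : ℕ} (n : ℕ) (h : a ≤ b) : (a:ℝ)/n ≤ (b:ℝ)/n := by
  rcases Nat.eq_zero_or_pos n with rfl | hn
  · simp
  · have hn' : (0:ℝ) < n := by exact_mod_cast hn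
    have h' : (a:ℝ) ≤ b := by exact_mod_cast h
    gcongr

open scoped Classical in
lemma ncard_inter_Iio (A : Set ℕ) (n : ℕ) :
    (A ∩ Set.Iio n).ncard = ((Finset.range n).filter (· ∈ A)).card := by
  rw [← Set.ncard_coe_finset]
  congr 1
  ext i
  simp [Set.mem_Iio, and_comm]

lemma negligible_mono {A B : Set ℕ} (h : A ⊆ B) (hB : Negligible B) : Negligible A := by
  apply squeeze_zero (g := fun n : ℕ => ((B ∩ Set.Iio n).ncard : ℝ) / n)
    (fun n => by positivity) _ hB
  intro n
  exact nat_div_le_div n (Set.ncard_le_ncard (Set.inter_subset_inter_left _ h)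
    ((Set.finite_Iio n).inter_of_right _))

lemma negligible_union {A B : Set ℕ} (hA : Negligible A) (hB : Negligible B) :
    Negligible (A ∪ B) := by
  have key : ∀ n : ℕ, (((A ∪ B) ∩ Set.Iio n).ncard : ℝ) / n ≤
      ((A ∩ Set.Iio n).ncard : ℝ) / n + ((B ∩ Set.Iio n).ncard : ℝ) / n := by
    intro n
    rw [← add_div, ← Nat.cast_add]
    apply nat_div_le_div
    rw [Set.union_inter_distrib_right]
    exact Set.ncard_union_le (A ∩ Set.Iio n) (B ∩ Set.Iio n)
  have h0 := hA.add hB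
  rw [add_zero] at h0
  exact squeeze_zero (fun n => by positivity) key h0

lemma negligible_finite {A : Set ℕ} (h : A.Finite) : Negligible A := by
  apply squeeze_zero (g := fun n : ℕ => (A.ncard : ℝ) / n) (fun n => by positivity)
  · intro n
    exact nat_div_le_div n (Set.ncard_le_ncard Set.inter_subset_left h)
  · exact tendsto_const_div_atTop_nhds_zero_nat _

lemma log_div_tendsto : Tendsto (fun n : ℕ => (Nat.log 10 n : ℝ) / n) atTop (nhds 0) := by
  have hlogb : Tendsto (fun n : ℕ => Real.logb 10 n / n) atTop (nhds 0) := by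
    have h1 : Tendsto (fun x : ℝ => Real.log x / x) atTop (nhds 0) :=
      Real.isLittleO_log_id_atTop.tendsto_div_nhds_zero
    have h2 := (h1.comp (tendsto_natCast_atTop_atTop (R := ℝ))).div_const (Real.log 10)
    rw [zero_div] at h2
    apply h2.congr
    intro n
    simp only [Function.comp_apply, Real.logb]
    ring
  apply squeeze_zero' (Eventually.of_forall fun n => by positivity) _ hlogb
  filter_upwards [eventually_ge_atTop 1] with n hn
  have hlog : (10:ℝ)^(Nat.log 10 n) ≤ n := by
    exact_mod_cast Nat.pow_log_le_self 10 (by omega)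
  have h3 : (Nat.log 10 n : ℝ) ≤ Real.logb 10 n := by
    have := Real.logb_le_logb_of_le (b := 10) (by norm_num)
      (x := (10:ℝ)^(Nat.log 10 n)) (by positivity) hlog
    rwa [Real.logb_pow, Real.logb_self_eq_one (by norm_num), mul_one] at this
  have hn' : (0:ℝ) < n := by exact_mod_cast hn
  gcongr

/-- The set of naturals within distance `3` above a power of `10`. -/
def Epow : Set ℕ := {n | ∃ k, 10^k ≤ n ∧ n < 10^k + 3}

lemma epow_card_le (n : ℕ) : (Epow ∩ Set.Iio n).ncard ≤ 3 * (Nat.log 10 n + 1) := by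
  classical
  rw [ncard_inter_Iio]
  have hsub : (Finset.range n).filter (· ∈ Epow) ⊆
      (Finset.range (Nat.log 10 n + 1) ×ˢ Finset.range 3).image
        (fun p : ℕ × ℕ => 10^p.1 + p.2) := by
    intro i hi
    simp only [Finset.mem_filter, Finset.mem_range] at hi
    obtain ⟨hin, k, hk1, hk2⟩ := hi
    simp only [Finset.mem_image, Finset.mem_product, Finset.mem_range]
    refine ⟨⟨k, i - 10^k⟩, ⟨?_, by simp; omega⟩, by simp; omega⟩
    have hi0 : i ≠ 0 := by
      have := Nat.one_le_pow k 10 (by norm_num); omega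
    have hkle : k ≤ Nat.log 10 i := (Nat.le_log_iff_pow_le (by norm_num) hi0).mpr hk1
    have h2 : Nat.log 10 i ≤ Nat.log 10 n := Nat.log_mono_right (le_of_lt hin)
    omega
  calc ((Finset.range n).filter (· ∈ Epow)).card
      ≤ _ := Finset.card_le_card hsub
    _ ≤ (Finset.range (Nat.log 10 n + 1) ×ˢ Finset.range 3).card := Finset.card_image_le
    _ = 3 * (Nat.log 10 n + 1) := by simp [Finset.card_product, Nat.mul_comm]

lemma negligible_Epow : Negligible Epow := by
  have h1 : Tendsto (fun n : ℕ => 3 * ((Nat.log 10 n : ℝ) / n) + 4 / n) atTop (nhds 0) := by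
    have := (log_div_tendsto.const_mul 3).add (tendsto_const_div_atTop_nhds_zero_nat 4)
    simpa using this
  apply squeeze_zero (fun n => by positivity) _ h1
  intro n
  have hb := epow_card_le n
  calc ((Epow ∩ Set.Iio n).ncard : ℝ) / n ≤ ((3 * (Nat.log 10 n + 1) : ℕ) : ℝ) / n :=
        nat_div_le_div n hb
    _ ≤ 3 * ((Nat.log 10 n : ℝ) / n) + 4 / n := by
        have heq : ((3 * (Nat.log 10 n + 1) : ℕ) : ℝ) / n
            = 3 * ((Nat.log 10 n : ℝ) / n) + 3 / n := by push_cast; ring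
        rw [heq]
        gcongr; norm_num

lemma statTendsto_of_eq_off {t : ℕ → ℝ} {a : ℝ} {S : Set ℕ} (hS : Negligible S)
    (h : ∀ n, n ∉ S → t n = a) : StatTendsto t a := by
  intro ε hε
  apply negligible_mono _ hS
  intro n hn
  simp only [Set.mem_setOf_eq] at hn
  by_contra hnS
  rw [h n hnS] at hn
  simp at hn
  linarith [hn]

/-! ### The permutations -/

open Classical in
noncomputable def fA (M : ℕ) (n : ℕ) : ℕ :=
  if ∃ k, n = 10^k then 10^(Nat.log 10 n + M) + 2
  else if ∃ j, M ≤ j ∧ n = 10^j + 2 then 10^(Nat.log 10 (n-2) - M)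
  else n

lemma fA_pow (M k : ℕ) : fA M (10^k) = 10^(k+M) + 2 := by
  rw [fA, if_pos ⟨k, rfl⟩, Nat.log_pow (by norm_num)]

lemma fA_pow2 (M j : ℕ) (h : M ≤ j) : fA M (10^j + 2) = 10^(j - M) := by
  rw [fA, if_neg, if_pos ⟨j, h, rfl⟩]
  · congr 1
    rw [Nat.add_sub_cancel, Nat.log_pow (by norm_num)]
  · rintro ⟨k, hk⟩
    exact pow10_ne (c := 2) (by norm_num) (by norm_num) j k hk.symm

lemma fA_other (M n : ℕ) (h1 : ¬∃ k, n = 10^k) (h2 : ¬∃ j, M ≤ j ∧ n = 10^j + 2) :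
    fA M n = n := by
  rw [fA, if_neg h1, if_neg h2]

lemma fA_invol (M : ℕ) : Function.Involutive (fA M) := by
  intro n
  by_cases h1 : ∃ k, n = 10^k
  · obtain ⟨k, rfl⟩ := h1
    rw [fA_pow, fA_pow2 M (k+M) (by omega), Nat.add_sub_cancel]
  · by_cases h2 : ∃ j, M ≤ j ∧ n = 10^j + 2
    · obtain ⟨j, hM, rfl⟩ := h2
      rw [fA_pow2 M j hM, fA_pow, Nat.sub_add_cancel hM]
    · rw [fA_other M n h1 h2, fA_other M n h1 h2]

noncomputable def permA (M : ℕ) : Equiv.Perm ℕ := (fA_invol M).toPerm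

lemma permA_apply (M n : ℕ) : permA M n = fA M n := rfl

open Classical in
noncomputable def fB (M : ℕ) (n : ℕ) : ℕ :=
  if ∃ k, n + 1 = 10^k then 10^(Nat.log 10 (n+1) + M) + 2
  else if ∃ j, M ≤ j ∧ n = 10^j + 2 then 10^(Nat.log 10 (n-2) - M) - 1
  else n

lemma fB_pow (M k : ℕ) : fB M (10^k - 1) = 10^(k+M) + 2 := by
  have h1 : (1:ℕ) ≤ 10^k := Nat.one_le_pow k 10 (by norm_num)
  have he : 10^k - 1 + 1 = 10^k := by omega
  rw [fB, if_pos ⟨k, he⟩, he, Nat.log_pow (by norm_num)]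

lemma fB_pow2 (M j : ℕ) (h : M ≤ j) : fB M (10^j + 2) = 10^(j - M) - 1 := by
  rw [fB, if_neg, if_pos ⟨j, h, rfl⟩]
  · congr 2
    rw [Nat.add_sub_cancel, Nat.log_pow (by norm_num)]
  · rintro ⟨k, hk⟩
    exact pow10_ne (c := 3) (by norm_num) (by norm_num) j k (by omega)

lemma fB_other (M n : ℕ) (h1 : ¬∃ k, n + 1 = 10^k) (h2 : ¬∃ j, M ≤ j ∧ n = 10^j + 2) :
    fB M n = n := by
  rw [fB, if_neg h1, if_neg h2]

lemma fB_invol (M : ℕ) : Function.Involutive (fB M) := by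
  intro n
  by_cases h1 : ∃ k, n + 1 = 10^k
  · obtain ⟨k, hk⟩ := h1
    have h1' : (1:ℕ) ≤ 10^k := Nat.one_le_pow k 10 (by norm_num)
    have hn : n = 10^k - 1 := by omega
    subst hn
    rw [fB_pow, fB_pow2 M (k+M) (by omega), Nat.add_sub_cancel]
  · by_cases h2 : ∃ j, M ≤ j ∧ n = 10^j + 2
    · obtain ⟨j, hM, rfl⟩ := h2
      rw [fB_pow2 M j hM, fB_pow, Nat.sub_add_cancel hM]
    · rw [fB_other M n h1 h2, fB_other M n h1 h2]

noncomputable def permB (M : ℕ) : Equiv.Perm ℕ := (fB_invol M).toPerm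

lemma permB_apply (M n : ℕ) : permB M n = fB M n := rfl

/-! ### Counting lemmas -/

open Classical in
lemma cP_eq (n : ℕ) (hn : 1 ≤ n) :
    ((Finset.range n).filter (fun i => ∃ k, i + 1 = 10^k)).card = Nat.log 10 n + 1 := by
  have himg : (Finset.range n).filter (fun i => ∃ k, i + 1 = 10^k)
      = (Finset.range (Nat.log 10 n + 1)).image (fun k => 10^k - 1) := by
    ext i
    simp only [Finset.mem_filter, Finset.mem_range, Finset.mem_image]
    constructor
    · rintro ⟨hin, k, hk⟩
      refine ⟨k, ?_, by omega⟩
      have : (10:ℕ)^k ≤ n := by omega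
      have := (Nat.le_log_iff_pow_le (by norm_num) (by omega)).mpr this
      omega
    · rintro ⟨k, hk, rfl⟩
      have h1 : (1:ℕ) ≤ 10^k := Nat.one_le_pow k 10 (by norm_num)
      have h2 : (10:ℕ)^k ≤ n := by
        calc (10:ℕ)^k ≤ 10^(Nat.log 10 n) := Nat.pow_le_pow_right (by norm_num) (by omega)
          _ ≤ n := Nat.pow_log_le_self 10 (by omega)
      exact ⟨by omega, k, by omega⟩
  rw [himg, Finset.card_image_of_injective _ ?_, Finset.card_range]
  intro a b hab
  dsimp only at hab
  have ha : (1:ℕ) ≤ 10^a := Nat.one_le_pow a 10 (by norm_num)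
  have hb : (1:ℕ) ≤ 10^b := Nat.one_le_pow b 10 (by norm_num)
  have : (10:ℕ)^a = 10^b := by omega
  exact Nat.pow_right_injective (by norm_num) this

open Classical in
lemma cB_eq (M n : ℕ) (hn : 4 ≤ n) :
    ((Finset.range n).filter (fun i => ∃ j, M ≤ j ∧ i = 10^j + 2)).card
      = Nat.log 10 (n-3) + 1 - M := by
  have himg : (Finset.range n).filter (fun i => ∃ j, M ≤ j ∧ i = 10^j + 2)
      = (Finset.Ico M (Nat.log 10 (n-3) + 1)).image (fun j => 10^j + 2) := by
    ext i
    simp only [Finset.mem_filter, Finset.mem_range, Finset.mem_image, Finset.mem_Ico]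
    constructor
    · rintro ⟨hin, j, hM, rfl⟩
      refine ⟨j, ⟨hM, ?_⟩, rfl⟩
      have : (10:ℕ)^j ≤ n - 3 := by omega
      have := (Nat.le_log_iff_pow_le (by norm_num) (by omega)).mpr this
      omega
    · rintro ⟨j, ⟨hM, hj⟩, rfl⟩
      have h2 : (10:ℕ)^j ≤ n - 3 := by
        calc (10:ℕ)^j ≤ 10^(Nat.log 10 (n-3)) := Nat.pow_le_pow_right (by norm_num) (by omega)
          _ ≤ n - 3 := Nat.pow_log_le_self 10 (by omega)
      exact ⟨by omega, j, hM, rfl⟩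
  rw [himg, Finset.card_image_of_injective _ ?_, Nat.card_Ico]
  intro a b hab
  dsimp only at hab
  have hab' : (10:ℕ)^a = 10^b := by omega
  exact Nat.pow_right_injective (by norm_num) hab'

open Classical in
lemma cA_eq (n : ℕ) (hn : 2 ≤ n) :
    ((Finset.range n).filter (fun i => ∃ k, i = 10^k)).card = Nat.log 10 (n-1) + 1 := by
  have himg : (Finset.range n).filter (fun i => ∃ k, i = 10^k)
      = (Finset.range (Nat.log 10 (n-1) + 1)).image (fun k => 10^k) := by
    ext i
    simp only [Finset.mem_filter, Finset.mem_range, Finset.mem_image]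
    constructor
    · rintro ⟨hin, k, rfl⟩
      refine ⟨k, ?_, rfl⟩
      have : (10:ℕ)^k ≤ n - 1 := by omega
      have := (Nat.le_log_iff_pow_le (by norm_num) (by omega)).mpr this
      omega
    · rintro ⟨k, hk, rfl⟩
      have h2 : (10:ℕ)^k ≤ n - 1 := by
        calc (10:ℕ)^k ≤ 10^(Nat.log 10 (n-1)) := Nat.pow_le_pow_right (by norm_num) (by omega)
          _ ≤ n - 1 := Nat.pow_log_le_self 10 (by omega)
      exact ⟨by omega, k, rfl⟩
  rw [himg, Finset.card_image_of_injective _ ?_, Finset.card_range]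
  intro a b hab
  dsimp only at hab
  exact Nat.pow_right_injective (by norm_num) hab

/-! ### Values of the permuted sequences -/

section Val
variable {lam : ℝ} {x : ℕ → ℝ}
    (hpos : ∀ n : ℕ, (∃ k : ℕ, n + 1 = 10 ^ k) → x n = lam)
    (hneg : ∀ n : ℕ, (∃ k : ℕ, n + 1 = 10 ^ k + 1) → x n = -lam)
    (hzero : ∀ n : ℕ, ¬(∃ k : ℕ, n + 1 = 10 ^ k) → ¬(∃ k : ℕ, n + 1 = 10 ^ k + 1) →
      x n = 0)

open Classical in
include hpos hneg hzero in
lemma valA (M i : ℕ) :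
    x (fA M i) = lam * (if ∃ k, i + 1 = 10^k then (1:ℝ) else 0)
      - lam * (if ∃ j, M ≤ j ∧ i = 10^j + 2 then (1:ℝ) else 0) := by
  by_cases h1 : ∃ k, i = 10^k
  · obtain ⟨k, rfl⟩ := h1
    rw [fA_pow]
    rw [if_neg, if_neg]
    · have hz := hzero (10^(k+M) + 2) ?_ ?_
      · rw [hz]; ring
      · rintro ⟨k', hk'⟩
        exact pow10_ne (c := 3) (by norm_num) (by norm_num) (k+M) k' (by omega)
      · rintro ⟨k', hk'⟩
        exact pow10_ne (c := 2) (by norm_num) (by norm_num) (k+M) k' (by omega)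
    · rintro ⟨j, _, hj⟩
      exact pow10_ne (c := 2) (by norm_num) (by norm_num) j k hj
    · rintro ⟨k', hk'⟩
      exact pow10_ne (c := 1) (by norm_num) (by norm_num) k k' (by omega)
  · by_cases h2 : ∃ j, M ≤ j ∧ i = 10^j + 2
    · obtain ⟨j, hM, rfl⟩ := h2
      rw [fA_pow2 M j hM]
      rw [if_neg, if_pos ⟨j, hM, rfl⟩]
      · rw [hneg _ ⟨j - M, rfl⟩]; ring
      · rintro ⟨k', hk'⟩
        exact pow10_ne (c := 3) (by norm_num) (by norm_num) j k' (by omega)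
    · rw [fA_other M i h1 h2, if_neg h2]
      by_cases hP : ∃ k, i + 1 = 10^k
      · rw [if_pos hP, hpos _ hP]; ring
      · rw [if_neg hP]
        rw [hzero _ hP ?_]
        · ring
        · rintro ⟨k', hk'⟩
          exact h1 ⟨k', by omega⟩

open Classical in
include hpos hneg hzero in
lemma valB (M i : ℕ) :
    x (fB M i) = lam * (if ∃ j, M ≤ j ∧ i = 10^j + 2 then (1:ℝ) else 0)
      - lam * (if ∃ k, i = 10^k then (1:ℝ) else 0) := by
  by_cases h1 : ∃ k, i + 1 = 10^k
  · obtain ⟨k, hk⟩ := h1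
    have hp1 : (1:ℕ) ≤ 10^k := Nat.one_le_pow k 10 (by norm_num)
    have hi : i = 10^k - 1 := by omega
    subst hi
    rw [fB_pow]
    rw [if_neg, if_neg]
    · have hz := hzero (10^(k+M) + 2) ?_ ?_
      · rw [hz]; ring
      · rintro ⟨k', hk'⟩
        exact pow10_ne (c := 3) (by norm_num) (by norm_num) (k+M) k' (by omega)
      · rintro ⟨k', hk'⟩
        exact pow10_ne (c := 2) (by norm_num) (by norm_num) (k+M) k' (by omega)
    · rintro ⟨k', hk'⟩
      exact pow10_ne (c := 1) (by norm_num) (by norm_num) k' k (by omega)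
    · rintro ⟨j, _, hj⟩
      exact pow10_ne (c := 3) (by norm_num) (by norm_num) j k (by omega)
  · by_cases h2 : ∃ j, M ≤ j ∧ i = 10^j + 2
    · obtain ⟨j, hM, rfl⟩ := h2
      have hp1 : (1:ℕ) ≤ 10^(j-M) := Nat.one_le_pow _ 10 (by norm_num)
      rw [fB_pow2 M j hM]
      rw [if_pos ⟨j, hM, rfl⟩, if_neg]
      · rw [hpos _ ⟨j - M, by omega⟩]; ring
      · rintro ⟨k', hk'⟩
        exact pow10_ne (c := 2) (by norm_num) (by norm_num) j k' (by omega)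
    · rw [fB_other M i h1 h2, if_neg h2]
      by_cases h3 : ∃ k, i = 10^k
      · rw [if_pos h3]
        obtain ⟨k, rfl⟩ := h3
        rw [hneg _ ⟨k, rfl⟩]; ring
      · rw [if_neg h3]
        rw [hzero _ h1 ?_]
        · ring
        · rintro ⟨k', hk'⟩
          exact h3 ⟨k', by omega⟩

/-! ### Partial sums -/

open Classical in
include hpos hneg hzero in
lemma sumA (M n : ℕ) :
    ∑ i ∈ Finset.range n, x (fA M i)
      = lam * ((Finset.range n).filter (fun i => ∃ k, i + 1 = 10^k)).card
        - lam * ((Finset.range n).filter (fun i => ∃ j, M ≤ j ∧ i = 10^j + 2)).card := by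
  rw [← Finset.sum_boole (p := fun i => ∃ k, i + 1 = 10^k),
    ← Finset.sum_boole (p := fun i => ∃ j, M ≤ j ∧ i = 10^j + 2),
    Finset.mul_sum, Finset.mul_sum, ← Finset.sum_sub_distrib]
  exact Finset.sum_congr rfl fun i _ => valA hpos hneg hzero M i

open Classical in
include hpos hneg hzero in
lemma sumB (M n : ℕ) :
    ∑ i ∈ Finset.range n, x (fB M i)
      = lam * ((Finset.range n).filter (fun i => ∃ j, M ≤ j ∧ i = 10^j + 2)).card
        - lam * ((Finset.range n).filter (fun i => ∃ k, i = 10^k)).card := by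
  rw [← Finset.sum_boole (p := fun i => ∃ j, M ≤ j ∧ i = 10^j + 2),
    ← Finset.sum_boole (p := fun i => ∃ k, i = 10^k),
    Finset.mul_sum, Finset.mul_sum, ← Finset.sum_sub_distrib]
  exact Finset.sum_congr rfl fun i _ => valB hpos hneg hzero M i

include hpos hneg hzero in
lemma memA (M : ℕ) : lam * (M:ℝ) ∈ SRst x := by
  refine ⟨permA M, ?_⟩
  have hgood : ∀ n : ℕ, n ∉ (Set.Iio (10^M + 3) ∪ Epow) →
      ∑ i ∈ Finset.range n, x (permA M i) = lam * M := by
    intro n hn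
    classical
    simp only [Set.mem_union, Set.mem_Iio, Epow, Set.mem_setOf_eq, not_or, not_lt,
      not_exists, not_and] at hn
    obtain ⟨hn1, hn2⟩ := hn
    have hM1 : (1:ℕ) ≤ 10^M := Nat.one_le_pow M 10 (by norm_num)
    have hn4 : 4 ≤ n := by omega
    have hlogeq : Nat.log 10 n = Nat.log 10 (n-3) := by
      have hk1 : (10:ℕ)^(Nat.log 10 n) ≤ n := Nat.pow_log_le_self 10 (by omega)
      have hk2 : ¬ n < 10^(Nat.log 10 n) + 3 := by
        intro hcon
        exact absurd hk1 (by have := hn2 (Nat.log 10 n); omega)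
      have hk3 : (10:ℕ)^(Nat.log 10 n) ≤ n - 3 := by omega
      have h4 := (Nat.le_log_iff_pow_le (b := 10) (by norm_num) (x := Nat.log 10 n)
        (y := n - 3) (by omega)).mpr hk3
      have h5 : Nat.log 10 (n-3) ≤ Nat.log 10 n := Nat.log_mono_right (by omega)
      omega
    have hMlog : M ≤ Nat.log 10 (n-3) := by
      have : (10:ℕ)^M ≤ n - 3 := by omega
      exact (Nat.le_log_iff_pow_le (by norm_num) (by omega)).mpr this
    have hsum := sumA hpos hneg hzero M n
    simp only [permA_apply]
    rw [hsum, cP_eq n (by omega), cB_eq M n hn4]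
    have hcast : ((Nat.log 10 (n-3) + 1 - M : ℕ) : ℝ)
        = (Nat.log 10 (n-3) : ℝ) + 1 - M := by
      have : M ≤ Nat.log 10 (n-3) + 1 := by omega
      push_cast [Nat.cast_sub this]
      ring
    rw [hcast, hlogeq]
    push_cast
    ring
  exact statTendsto_of_eq_off
    (negligible_union (negligible_finite (Set.finite_Iio _)) negligible_Epow) hgood

include hpos hneg hzero in
lemma memB (M : ℕ) : -(lam * (M:ℝ)) ∈ SRst x := by
  refine ⟨permB M, ?_⟩
  have hgood : ∀ n : ℕ, n ∉ (Set.Iio (10^M + 3) ∪ Epow) →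
      ∑ i ∈ Finset.range n, x (permB M i) = -(lam * M) := by
    intro n hn
    classical
    simp only [Set.mem_union, Set.mem_Iio, Epow, Set.mem_setOf_eq, not_or, not_lt,
      not_exists, not_and] at hn
    obtain ⟨hn1, hn2⟩ := hn
    have hM1 : (1:ℕ) ≤ 10^M := Nat.one_le_pow M 10 (by norm_num)
    have hn4 : 4 ≤ n := by omega
    have hlogeq : Nat.log 10 (n-1) = Nat.log 10 (n-3) := by
      have hk1 : (10:ℕ)^(Nat.log 10 (n-1)) ≤ n - 1 := Nat.pow_log_le_self 10 (by omega)
      have hk2 : ¬ n < 10^(Nat.log 10 (n-1)) + 3 := by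
        intro hcon
        have := hn2 (Nat.log 10 (n-1)); omega
      have hk3 : (10:ℕ)^(Nat.log 10 (n-1)) ≤ n - 3 := by omega
      have h4 := (Nat.le_log_iff_pow_le (b := 10) (by norm_num) (x := Nat.log 10 (n-1))
        (y := n - 3) (by omega)).mpr hk3
      have h5 : Nat.log 10 (n-3) ≤ Nat.log 10 (n-1) := Nat.log_mono_right (by omega)
      omega
    have hMlog : M ≤ Nat.log 10 (n-3) := by
      have : (10:ℕ)^M ≤ n - 3 := by omega
      exact (Nat.le_log_iff_pow_le (by norm_num) (by omega)).mpr this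
    have hsum := sumB hpos hneg hzero M n
    simp only [permB_apply]
    rw [hsum, cA_eq n (by omega), cB_eq M n hn4]
    have hcast : ((Nat.log 10 (n-3) + 1 - M : ℕ) : ℝ)
        = (Nat.log 10 (n-3) : ℝ) + 1 - M := by
      have : M ≤ Nat.log 10 (n-3) + 1 := by omega
      push_cast [Nat.cast_sub this]
      ring
    rw [hcast, hlogeq]
    push_cast
    ring
  exact statTendsto_of_eq_off
    (negligible_union (negligible_finite (Set.finite_Iio _)) negligible_Epow) hgood

/-! ### Forward direction -/

include hpos hneg hzero in
lemma x_mem_values (j : ℕ) : x j = lam ∨ x j = -lam ∨ x j = 0 := by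
  by_cases h1 : ∃ k, j + 1 = 10^k
  · exact Or.inl (hpos j h1)
  · by_cases h2 : ∃ k, j + 1 = 10^k + 1
    · exact Or.inr (Or.inl (hneg j h2))
    · exact Or.inr (Or.inr (hzero j h1 h2))

end Val

lemma not_negligible_univ : ¬ Negligible Set.univ := by
  intro h
  have heq : (fun n : ℕ => (((Set.univ : Set ℕ) ∩ Set.Iio n).ncard : ℝ) / n) =ᶠ[atTop]
      (fun _ : ℕ => (1:ℝ)) := by
    filter_upwards [eventually_ge_atTop 1] with n hn
    rw [Set.univ_inter]
    have hset : (Set.Iio n : Set ℕ) = ↑(Finset.range n) := by ext i; simp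
    rw [hset, Set.ncard_coe_finset, Finset.card_range, div_self]
    have : (0:ℝ) < n := by exact_mod_cast hn
    exact ne_of_gt this
  have h1 : Tendsto (fun _ : ℕ => (1:ℝ)) atTop (nhds 0) := h.congr' heq
  have := tendsto_nhds_unique h1 tendsto_const_nhds
  norm_num at this

/-- Here `x i` denotes the `(i+1)`-st term of the series, i.e. the sequence is
`x_1, x_2, …` with `x_n = λ` for `n = 10^k`, `x_n = -λ` for `n = 10^k + 1`,
and `x_n = 0` otherwise. -/
theorem stat_sum_range_example_lambdaZ (lam : ℝ) (x : ℕ → ℝ)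
    (hpos : ∀ n : ℕ, (∃ k : ℕ, n + 1 = 10 ^ k) → x n = lam)
    (hneg : ∀ n : ℕ, (∃ k : ℕ, n + 1 = 10 ^ k + 1) → x n = -lam)
    (hzero : ∀ n : ℕ, ¬(∃ k : ℕ, n + 1 = 10 ^ k) → ¬(∃ k : ℕ, n + 1 = 10 ^ k + 1) →
      x n = 0) :
    SRst x = {y : ℝ | ∃ m : ℤ, y = lam * m} := by
  ext a
  constructor
  · rintro ⟨π, hπ⟩
    set t : ℕ → ℝ := fun n => ∑ k ∈ Finset.range n, x (π k) with ht
    -- every partial sum is an integer multiple of lam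
    have hval : ∀ n, ∃ m : ℤ, t n = lam * m := by
      intro n
      induction n with
      | zero => exact ⟨0, by simp [ht]⟩
      | succ n ih =>
        obtain ⟨m, hm⟩ := ih
        have hstep : t (n+1) = t n + x (π n) := Finset.sum_range_succ _ n
        rcases x_mem_values hpos hneg hzero (π n) with h | h | h
        · exact ⟨m + 1, by rw [hstep, hm, h]; push_cast; ring⟩
        · exact ⟨m - 1, by rw [hstep, hm, h]; push_cast; ring⟩
        · exact ⟨m, by rw [hstep, hm, h]; ring⟩
    have happrox : ∀ ε : ℝ, 0 < ε → ∃ n, |t n - a| ≤ ε := by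
      intro ε hε
      by_contra hcon
      push_neg at hcon
      have huniv : {n : ℕ | |t n - a| > ε} = Set.univ := by
        ext n; simpa using hcon n
      have := hπ ε hε
      rw [huniv] at this
      exact not_negligible_univ this
    by_cases hlam : lam = 0
    · refine ⟨0, ?_⟩
      have ha : a = 0 := by
        by_contra ha0
        obtain ⟨n, hn⟩ := happrox (|a|/2) (by positivity)
        obtain ⟨m, hm⟩ := hval n
        rw [hm, hlam, zero_mul] at hn
        rw [abs_sub_comm] at hn
        simp only [sub_zero] at hn
        have : |a| > 0 := abs_pos.mpr ha0
        linarith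
      simp [ha]
    · -- lam ≠ 0
      have hlampos : 0 < |lam| := abs_pos.mpr hlam
      obtain ⟨n₀, hn₀⟩ := happrox (|lam|/3) (by positivity)
      obtain ⟨m₀, hm₀⟩ := hval n₀
      refine ⟨m₀, ?_⟩
      by_contra hane
      have hδ : 0 < |lam * m₀ - a| := by
        rw [abs_pos, sub_ne_zero]
        exact fun h => hane h.symm
      set δ := |lam * m₀ - a| with hδdef
      have hδ3 : δ ≤ |lam|/3 := by rw [hδdef, ← hm₀]; exact hn₀
      obtain ⟨n₁, hn₁⟩ := happrox (δ/2) (by positivity)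
      obtain ⟨m₁, hm₁⟩ := hval n₁
      have hdist : |lam * m₁ - lam * m₀| < |lam| := by
        have h1 : |lam * m₁ - a| ≤ δ/2 := by rw [← hm₁]; exact hn₁
        calc |lam * m₁ - lam * m₀| ≤ |lam * m₁ - a| + |a - lam * m₀| := by
              have := abs_sub_le (lam * m₁) a (lam * m₀); linarith [this]
          _ ≤ δ/2 + δ := by
              rw [abs_sub_comm a (lam * m₀)]
              linarith
          _ < |lam| := by linarith
      have hmeq : m₁ = m₀ := by
        by_contra hne
        have h1 : (1:ℝ) ≤ |(m₁ : ℝ) - m₀| := by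
          have h2 : (1:ℤ) ≤ |m₁ - m₀| := Int.one_le_abs (by omega)
          exact_mod_cast h2
        have : |lam * m₁ - lam * m₀| = |lam| * |(m₁:ℝ) - m₀| := by
          rw [← abs_mul]; ring_nf
        rw [this] at hdist
        nlinarith
      rw [hmeq] at hm₁
      have : |lam * m₀ - a| ≤ δ/2 := by rw [← hm₁]; exact hn₁
      linarith
  · rintro ⟨m, rfl⟩
    obtain ⟨M, hM | hM⟩ := Int.eq_nat_or_neg m
    · have := memA hpos hneg hzero M
      rw [hM]; push_cast; exact this
    · have := memB hpos hneg hzero M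
      rw [hM]; push_cast; convert this using 1; ring
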